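/- Let φ be a continuous flow on a compact metric space X, T > 0, x a periodic (non-singular) point with minimal period t_x ≤ T, and 0 < α < t_x. Then there is β₀ > 0 such that for all 0 < β < β₀, every y in the closed ball B[x, β] which is periodic with minimal period t_y ∈ [0, T] satisfies t_y ∈ [k·t_x − α/2, k·t_x + α/2] for some integer 1 ≤ k ≤ ⌊T/t_x⌋. -/

import Mathlib

/-- `p` is the minimal period of `y` for the flow `φ`: either `p > 0` is the least
positive number with `φ_p(y) = y`, or `p = 0` and `y` is a singularity. -/
def IsMinPeriod {X : Type*} (φ : ℝ → X → X) (y : X) (p : ℝ) : Prop :=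
  (0 < p ∧ φ p y = y ∧ ∀ s : ℝ, 0 < s → φ s y = y → p ≤ s) ∨
    (p = 0 ∧ ∀ t : ℝ, φ t y = y)

/-- Localization of periods: periodic points of period at most `T` near a periodic
point `x` have period close to an integer multiple `k·t_x`, `1 ≤ k ≤ ⌊T/t_x⌋`. -/
theorem period_localization
    {X : Type*} [MetricSpace X] [CompactSpace X]
    (φ : ℝ → X → X)
    (hcont : Continuous fun p : ℝ × X => φ p.1 p.2)
    (hzero : ∀ x, φ 0 x = x)
    (hadd : ∀ s t x, φ t (φ s x) = φ (t + s) x)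
    (T : ℝ) (hT : 0 < T)
    (x : X) (tx : ℝ)
    (hx : 0 < tx ∧ φ tx x = x ∧ ∀ s : ℝ, 0 < s → φ s x = x → tx ≤ s)
    (htxT : tx ≤ T)
    (α : ℝ) (hα : 0 < α) (hαtx : α < tx) :
    ∃ β₀ > 0, ∀ β, 0 < β → β < β₀ →
      ∀ (y : X) (ty : ℝ), dist x y ≤ β → IsMinPeriod φ y ty →
        0 ≤ ty → ty ≤ T →
        ∃ k : ℤ, 1 ≤ k ∧ k ≤ ⌊T / tx⌋ ∧
          ty ∈ Set.Icc ((k : ℝ) * tx - α / 2) ((k : ℝ) * tx + α / 2) := by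
  obtain ⟨htx, hφtx, hminx⟩ := hx
  -- basic period arithmetic
  have negper : ∀ (y : X) (s : ℝ), φ s y = y → φ (-s) y = y := by
    intro y s hs
    have h := hadd s (-s) y
    rw [hs, neg_add_cancel, hzero] at h
    exact h
  have natper : ∀ (y : X) (s : ℝ), φ s y = y → ∀ n : ℕ, φ ((n : ℝ) * s) y = y := by
    intro y s hs n
    induction n with
    | zero => simpa using hzero y
    | succ n ih =>
      have h := hadd s ((n : ℝ) * s) y
      rw [hs, ih] at h
      have : ((n : ℝ) + 1) * s = (n : ℝ) * s + s := by ring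
      rw [Nat.cast_add, Nat.cast_one, this]
      exact h.symm
  have intper : ∀ (y : X) (s : ℝ), φ s y = y → ∀ n : ℤ, φ ((n : ℝ) * s) y = y := by
    intro y s hs n
    rcases le_or_gt 0 n with h | h
    · lift n to ℕ using h
      exact_mod_cast natper y s hs n
    · have h1 := natper y s hs (-n).toNat
      have h2 := negper y _ h1
      have h3 : -(((-n).toNat : ℝ) * s) = (n : ℝ) * s := by
        have hc : (((-n).toNat : ℤ) : ℝ) = ((-n : ℤ) : ℝ) :=
          congrArg (fun m : ℤ => (m : ℝ)) (Int.toNat_of_nonneg (by omega))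
        push_cast at hc
        rw [hc]; push_cast; ring
      rw [h3] at h2
      exact h2
  -- periods of x are integer multiples of tx
  have hmultx : ∀ t : ℝ, φ t x = x → ∃ n : ℤ, t = (n : ℝ) * tx := by
    intro t ht
    refine ⟨⌊t / tx⌋, ?_⟩
    set r := t - (⌊t / tx⌋ : ℝ) * tx with hr
    have hr0 : 0 ≤ r := by
      have h := Int.floor_le (t / tx)
      have := (le_div_iff₀ htx).mp h
      simp only [hr]; linarith
    have hrlt : r < tx := by
      have h := Int.lt_floor_add_one (t / tx)
      have := (div_lt_iff₀ htx).mp h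
      simp only [hr]; nlinarith
    have hφr : φ r x = x := by
      have h1 := intper x tx hφtx (-⌊t / tx⌋)
      have h2 := hadd (((-⌊t / tx⌋ : ℤ) : ℝ) * tx) t x
      rw [h1] at h2
      have h3 : t + ((-⌊t / tx⌋ : ℤ) : ℝ) * tx = r := by
        push_cast; simp only [hr]; ring
      rw [h3] at h2
      rw [← h2, ht]
    rcases eq_or_lt_of_le hr0 with h | h
    · simp only [hr] at h; linarith
    · have := hminx r h hφr
      linarith
  -- the gap parameter γ
  have hfloorT : T < ((⌊T / tx⌋ : ℝ) + 1) * tx := by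
    have h := Int.lt_floor_add_one (T / tx)
    have := (div_lt_iff₀ htx).mp h
    push_cast at this ⊢
    linarith
  set γ : ℝ := min (α / 2) (min (tx / 4) (((⌊T / tx⌋ : ℝ) + 1) * tx - T)) with hγdef
  have hγα : γ ≤ α / 2 := min_le_left _ _
  have hγtx : γ ≤ tx / 4 := le_trans (min_le_right _ _) (min_le_left _ _)
  have hγT : γ ≤ ((⌊T / tx⌋ : ℝ) + 1) * tx - T :=
    le_trans (min_le_right _ _) (min_le_right _ _)
  have hγ0 : 0 < γ := by
    apply lt_min (by linarith)
    apply lt_min (by linarith)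
    linarith
  -- the forbidden set C
  set f : ℝ → ℝ := fun t => dist (φ t x) x with hfdef
  have hf : Continuous f := by
    apply Continuous.dist _ continuous_const
    exact hcont.comp (continuous_id.prodMk continuous_const)
  set C : Set ℝ := {t : ℝ | t ∈ Set.Icc 0 T ∧ ∀ k : ℤ, γ ≤ |t - (k : ℝ) * tx|} with hCdef
  have hCeq : C = Set.Icc 0 T ∩ ⋂ k : ℤ, {t : ℝ | γ ≤ |t - (k : ℝ) * tx|} := by
    ext t
    simp [hCdef, Set.mem_iInter]
  have hCclosed : IsClosed C := by
    rw [hCeq]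
    refine isClosed_Icc.inter (isClosed_iInter fun k => ?_)
    exact isClosed_le continuous_const ((continuous_id.sub continuous_const).abs)
  have hCcompact : IsCompact C := by
    rw [hCeq]; exact isCompact_Icc.inter_right (isClosed_iInter fun k =>
      isClosed_le continuous_const ((continuous_id.sub continuous_const).abs))
  -- minimum of f on C is positive
  obtain ⟨ε, hε0, hεC⟩ : ∃ ε > 0, ∀ t ∈ C, ε ≤ f t := by
    rcases C.eq_empty_or_nonempty with h | h
    · exact ⟨1, one_pos, by simp [h]⟩
    · obtain ⟨t0, ht0C, ht0min⟩ := hCcompact.exists_isMinOn h hf.continuousOn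
      refine ⟨f t0, ?_, fun t ht => isMinOn_iff.mp ht0min t ht⟩
      rcases lt_or_eq_of_le (dist_nonneg : 0 ≤ f t0) with h' | h'
      · exact h'
      · exfalso
        have hft0 : φ t0 x = x := by
          have : dist (φ t0 x) x = 0 := h'.symm
          exact dist_eq_zero.mp this
        obtain ⟨n, hn⟩ := hmultx t0 hft0
        have := ht0C.2 n
        rw [hn] at this
        simp at this
        linarith
  -- uniform continuity on the compact set
  have hK : IsCompact (Set.Icc (0 : ℝ) T ×ˢ (Set.univ : Set X)) :=
    isCompact_Icc.prod isCompact_univ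
  have huc : UniformContinuousOn (fun p : ℝ × X => φ p.1 p.2)
      (Set.Icc (0 : ℝ) T ×ˢ (Set.univ : Set X)) :=
    hK.uniformContinuousOn_of_continuous hcont.continuousOn
  obtain ⟨δ, hδ0, hδ⟩ := (Metric.uniformContinuousOn_iff).mp huc (ε / 2) (half_pos hε0)
  refine ⟨min δ (ε / 2), lt_min hδ0 (half_pos hε0), ?_⟩
  intro β hβ0 hββ₀ y ty hdist hmy h0ty htyT
  have hβδ : β < δ := lt_of_lt_of_le hββ₀ (min_le_left _ _)
  have hβε : β < ε / 2 := lt_of_lt_of_le hββ₀ (min_le_right _ _)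
  -- periods of y in [0,T] are close to multiples of tx
  have hnotC : ∀ t : ℝ, 0 ≤ t → t ≤ T → φ t y = y → ∃ k : ℤ, |t - (k : ℝ) * tx| < γ := by
    intro t h1 h2 h3
    by_contra hcon
    push_neg at hcon
    have htC : t ∈ C := ⟨⟨h1, h2⟩, hcon⟩
    have hmemx : (t, x) ∈ Set.Icc (0 : ℝ) T ×ˢ (Set.univ : Set X) :=
      ⟨⟨h1, h2⟩, Set.mem_univ _⟩
    have hmemy : (t, y) ∈ Set.Icc (0 : ℝ) T ×ˢ (Set.univ : Set X) :=
      ⟨⟨h1, h2⟩, Set.mem_univ _⟩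
    have hdd : dist ((t, x) : ℝ × X) (t, y) < δ := by
      rw [Prod.dist_eq]
      simp only [dist_self]
      have : max 0 (dist x y) = dist x y := max_eq_right dist_nonneg
      rw [this]
      linarith
    have h4 : dist (φ t x) (φ t y) < ε / 2 := hδ (t, x) hmemx (t, y) hmemy hdd
    rw [h3] at h4
    have h5 : dist (φ t x) x ≤ dist (φ t x) (φ t y) + dist (φ t y) x := dist_triangle _ _ _
    rw [h3] at h5
    have h6 : dist y x < ε / 2 := by rw [dist_comm]; linarith
    have h7 := hεC t htC
    simp only [hfdef] at h7
    linarith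
  rcases hmy with ⟨hty0, hφty, hminy⟩ | ⟨hty0, hall⟩
  · -- genuinely periodic y
    -- Step 1: ty > γ
    have hγty : γ < ty := by
      by_contra hle
      push_neg at hle
      set m : ℕ := ⌊γ / ty⌋₊ + 1 with hm
      have hfl : (⌊γ / ty⌋₊ : ℝ) * ty ≤ γ := by
        have h := Nat.floor_le (le_of_lt (div_pos hγ0 hty0))
        have h2 : (⌊γ / ty⌋₊ : ℝ) * ty ≤ (γ / ty) * ty :=
          mul_le_mul_of_nonneg_right h (le_of_lt hty0)
        calc (⌊γ / ty⌋₊ : ℝ) * ty ≤ (γ / ty) * ty := h2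
        _ = γ := by field_simp
      have hm1 : γ < (m : ℝ) * ty := by
        have h := Nat.lt_floor_add_one (γ / ty)
        have h2 := (div_lt_iff₀ hty0).mp h
        rw [hm]
        push_cast at h2 ⊢
        linarith
      have hm2 : (m : ℝ) * ty ≤ 2 * γ := by
        rw [hm]
        push_cast
        nlinarith
      have hφm : φ ((m : ℝ) * ty) y = y := natper y ty hφty m
      obtain ⟨k, hk⟩ := hnotC ((m : ℝ) * ty) (by nlinarith) (by linarith) hφm
      obtain ⟨hk1, hk2⟩ := abs_lt.mp hk
      rcases le_or_gt (k : ℝ) 0 with h | h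
      · have hkt : (k : ℝ) * tx ≤ 0 := mul_nonpos_iff.mpr (Or.inr ⟨h, le_of_lt htx⟩)
        linarith
      · have h0 : (0 : ℤ) < k := by exact_mod_cast h
        have h1 : (1 : ℝ) ≤ (k : ℝ) := by exact_mod_cast h0
        have hkt : tx ≤ (k : ℝ) * tx := (le_mul_iff_one_le_left htx).mpr h1
        linarith
    -- Step 2: localize ty
    obtain ⟨k, hk⟩ := hnotC ty h0ty htyT hφty
    obtain ⟨hk1, hk2⟩ := abs_lt.mp hk
    have hkpos : 1 ≤ k := by
      rcases le_or_gt k 0 with h | h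
      · exfalso
        have hk0 : (k : ℝ) ≤ 0 := by exact_mod_cast h
        have hkt : (k : ℝ) * tx ≤ 0 := mul_nonpos_iff.mpr (Or.inr ⟨hk0, le_of_lt htx⟩)
        linarith
      · omega
    have hkfl : k ≤ ⌊T / tx⌋ := by
      have hlt : (k : ℝ) * tx < ((⌊T / tx⌋ : ℝ) + 1) * tx := by linarith
      have : (k : ℝ) < (⌊T / tx⌋ : ℝ) + 1 := lt_of_mul_lt_mul_right hlt (le_of_lt htx)
      have : (k : ℤ) < ⌊T / tx⌋ + 1 := by exact_mod_cast this
      omega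
    exact ⟨k, hkpos, hkfl, by constructor <;> [linarith; linarith]⟩
  · -- singular y: impossible
    exfalso
    obtain ⟨k, hk⟩ := hnotC (tx / 2) (by linarith) (by linarith) (hall _)
    obtain ⟨hk1, hk2⟩ := abs_lt.mp hk
    rcases le_or_gt (k : ℝ) 0 with h | h
    · have hkt : (k : ℝ) * tx ≤ 0 := mul_nonpos_iff.mpr (Or.inr ⟨h, le_of_lt htx⟩)
      linarith
    · have h0 : (0 : ℤ) < k := by exact_mod_cast h
      have h1 : (1 : ℝ) ≤ (k : ℝ) := by exact_mod_cast h0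
      have hkt : tx ≤ (k : ℝ) * tx := (le_mul_iff_one_le_left htx).mpr h1
      linarith
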